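/- arXiv:1511.01025 — 2 statements merged into one kernel-verified Lean document; each statement's English description precedes it below -/
import Mathlib

section
/- Let k ≥ 1 be an integer, let G be a proper k-color-line graph, and let Q be a maximal clique of G with at least k + 4 vertices. Then for every partition V(G) = Q1 ∪ Q2 ∪ … ∪ Qk of the vertex set of G into cliques such that the graph obtained from G by deleting, for each i, all edges with both endpoints in Qi is a line graph, the clique Q equals Qi for some i. -/
open SimpleGraph

/-- The color-line graph `CL(H)` of an edge-colored graph `(H, φ)`: vertices are the edges
of `H`, and two distinct edges are adjacent iff they share an endpoint or have equal colors. -/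
def colorLineGraph {V C : Type*} (H : SimpleGraph V) (φ : H.edgeSet → C) :
    SimpleGraph H.edgeSet where
  Adj e f := e ≠ f ∧
    ((∃ v, v ∈ (e : Sym2 V) ∧ v ∈ (f : Sym2 V)) ∨ φ e = φ f)
  symm := by
    constructor
    rintro e f ⟨hne, h⟩
    refine ⟨hne.symm, ?_⟩
    rcases h with ⟨v, hv1, hv2⟩ | h
    · exact Or.inl ⟨v, hv2, hv1⟩
    · exact Or.inr h.symm
  loopless := by constructor; rintro e ⟨hne, -⟩; exact hne rfl

/-- An edge coloring is proper if distinct edges sharing an endpoint get distinct colors. -/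
def IsProperEdgeColoring {V C : Type*} (H : SimpleGraph V) (φ : H.edgeSet → C) : Prop :=
  ∀ e f : H.edgeSet, e ≠ f → (∃ v, v ∈ (e : Sym2 V) ∧ v ∈ (f : Sym2 V)) → φ e ≠ φ f

/-- `G` is a color-line graph: `G ≅ CL(H)` for some finite edge-colored graph `H`. -/
def IsColorLineGraph {α : Type*} (G : SimpleGraph α) : Prop :=
  ∃ (V C : Type) (_ : Fintype V) (H : SimpleGraph V) (φ : H.edgeSet → C),
    Nonempty (G ≃g colorLineGraph H φ)

/-- `G` is a proper color-line graph: `G ≅ CL(H)` for some finite properly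
edge-colored graph `H`. -/
def IsProperColorLineGraph {α : Type*} (G : SimpleGraph α) : Prop :=
  ∃ (V C : Type) (_ : Fintype V) (H : SimpleGraph V) (φ : H.edgeSet → C),
    IsProperEdgeColoring H φ ∧ Nonempty (G ≃g colorLineGraph H φ)

/-- `G` is a `k`-color-line graph: `G ≅ CL(H)` for some finite graph `H`
edge-colored with at most `k` colors. -/
def IsKColorLineGraph (k : ℕ) {α : Type*} (G : SimpleGraph α) : Prop :=
  ∃ (V : Type) (_ : Fintype V) (H : SimpleGraph V) (φ : H.edgeSet → Fin k),
    Nonempty (G ≃g colorLineGraph H φ)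

/-- `G` is a proper `k`-color-line graph: `G ≅ CL(H)` for some finite graph `H`
properly edge-colored with at most `k` colors. -/
def IsProperKColorLineGraph (k : ℕ) {α : Type*} (G : SimpleGraph α) : Prop :=
  ∃ (V : Type) (_ : Fintype V) (H : SimpleGraph V) (φ : H.edgeSet → Fin k),
    IsProperEdgeColoring H φ ∧ Nonempty (G ≃g colorLineGraph H φ)

/-- `G` is a line graph: `G ≅ L(H)` for some finite graph `H`. -/
def IsLineGraph {α : Type*} (G : SimpleGraph α) : Prop :=
  ∃ (V : Type) (_ : Fintype V) (H : SimpleGraph V), Nonempty (G ≃g H.lineGraph)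

/-- If `G` is a proper `k`-color-line graph and `Q` is a maximal clique of `G` with at
least `k + 4` vertices, then in every partition of `V(G)` into `k` cliques whose removal
of internal edges leaves a line graph, `Q` is one of the parts. -/
theorem big_maximal_clique_is_part {α : Type} [Fintype α] (k : ℕ) (hk : 1 ≤ k)
    (G : SimpleGraph α) (hG : IsProperKColorLineGraph k G)
    (Q : Finset α) (hclique : G.IsClique (Q : Set α))
    (hmax : ∀ R : Finset α, G.IsClique (R : Set α) → Q ⊆ R → R = Q)
    (hcard : k + 4 ≤ Q.card) :
    ∀ P : Fin k → Set α,
      (∀ i, G.IsClique (P i)) →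
      (∀ v : α, ∃! i, v ∈ P i) →
      IsLineGraph (G.deleteEdges {e : Sym2 α | ∃ i, ∀ x ∈ e, x ∈ P i}) →
      ∃ i, (Q : Set α) = P i := by
  classical
  intro P hPclique hPuniq hline
  -- It suffices to show Q is contained in some part.
  suffices hsub : ∃ i, (Q : Set α) ⊆ P i by
    obtain ⟨i, hi⟩ := hsub
    refine ⟨i, ?_⟩
    have hR : G.IsClique ((P i).toFinset : Set α) := by
      rw [Set.coe_toFinset]; exact hPclique i
    have hQR : Q ⊆ (P i).toFinset := fun q hq => Set.mem_toFinset.2 (hi hq)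
    have heq := hmax _ hR hQR
    rw [← heq, Set.coe_toFinset]
  by_contra hno
  push_neg at hno
  obtain ⟨V, _, F, ⟨ψ⟩⟩ := hline
  -- the part function
  choose f hf hfu using hPuniq
  have hfuniq : ∀ v i, v ∈ P i → f v = i := fun v i h => (hfu v i h).symm
  -- edges of F associated to vertices
  set E : α → Sym2 V := fun x => ((ψ x : F.edgeSet) : Sym2 V) with hE
  have hEinj : ∀ x y, E x = E y → x = y := fun x y h =>
    ψ.toEquiv.injective (Subtype.ext h)
  have hEedge : ∀ x, E x ∈ F.edgeSet := fun x => (ψ x).2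
  -- same part, distinct: associated edges are disjoint
  have hsame : ∀ x y, x ≠ y → f x = f y → ¬ ∃ w, w ∈ E x ∧ w ∈ E y := by
    intro x y hxy hfxy hsh
    have hnadj : ¬ (G.deleteEdges {e : Sym2 α | ∃ i, ∀ x ∈ e, x ∈ P i}).Adj x y := by
      rw [SimpleGraph.deleteEdges_adj]
      rintro ⟨-, hmem⟩
      refine hmem ⟨f x, ?_⟩
      intro z hz
      rcases Sym2.mem_iff.1 hz with rfl | rfl
      · exact hf z
      · rw [hfxy]; exact hf z
    rw [← ψ.map_adj_iff, SimpleGraph.lineGraph_adj_iff_exists] at hnadj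
    exact hnadj ⟨fun h => hxy (ψ.toEquiv.injective h), hsh⟩
  -- different parts, both in Q: associated edges intersect
  have hdiff : ∀ x ∈ Q, ∀ y ∈ Q, f x ≠ f y → ∃ w, w ∈ E x ∧ w ∈ E y := by
    intro x hx y hy hfxy
    have hxy : x ≠ y := fun h => hfxy (by rw [h])
    have hadj : (G.deleteEdges {e : Sym2 α | ∃ i, ∀ x ∈ e, x ∈ P i}).Adj x y := by
      rw [SimpleGraph.deleteEdges_adj]
      refine ⟨hclique hx hy hxy, ?_⟩
      rintro ⟨i, hi⟩
      have h1 : f x = i := hfuniq x i (hi x (Sym2.mem_mk_left x y))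
      have h2 : f y = i := hfuniq y i (hi y (Sym2.mem_mk_right x y))
      exact hfxy (h1.trans h2.symm)
    rw [← ψ.map_adj_iff, SimpleGraph.lineGraph_adj_iff_exists] at hadj
    exact hadj.2
  by_cases hbig : ∃ i, 3 ≤ (Q.filter (fun q => f q = i)).card
  · -- a part with ≥ 3 vertices of Q, plus a vertex of Q outside it: impossible
    obtain ⟨i, hi3⟩ := hbig
    obtain ⟨q0, hq0Q, hq0P⟩ := Set.not_subset.1 (hno i)
    have hq0f : f q0 ≠ i := fun h => hq0P (h ▸ hf q0)
    obtain ⟨q1, q2, q3, h1, h2, h3, h12, h13, h23⟩ :=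
      Finset.two_lt_card_iff.1 (by omega : 2 < (Q.filter (fun q => f q = i)).card)
    rw [Finset.mem_filter] at h1 h2 h3
    obtain ⟨u, v, huv⟩ : ∃ u v, E q0 = s(u, v) :=
      Sym2.ind (fun u v => ⟨u, v, rfl⟩) (E q0)
    have key : ∀ q ∈ Q, f q = i → u ∈ E q ∨ v ∈ E q := by
      intro q hq hqf
      obtain ⟨w, hw0, hwq⟩ := hdiff q0 hq0Q q hq (by rw [hqf]; exact hq0f)
      rw [huv] at hw0
      rcases Sym2.mem_iff.1 hw0 with rfl | rfl
      · exact Or.inl hwq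
      · exact Or.inr hwq
    have n12 := hsame q1 q2 h12 (h1.2.trans h2.2.symm)
    have n13 := hsame q1 q3 h13 (h1.2.trans h3.2.symm)
    have n23 := hsame q2 q3 h23 (h2.2.trans h3.2.symm)
    rcases key q1 h1.1 h1.2 with k1 | k1 <;>
      rcases key q2 h2.1 h2.2 with k2 | k2 <;>
      rcases key q3 h3.1 h3.2 with k3 | k3 <;>
      first
        | exact n12 ⟨_, k1, k2⟩
        | exact n13 ⟨_, k1, k3⟩
        | exact n23 ⟨_, k2, k3⟩
  · -- all parts have ≤ 2 vertices of Q: at least 4 parts have exactly 2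
    push_neg at hbig
    have hbig' : ∀ i, (Q.filter (fun q => f q = i)).card ≤ 2 :=
      fun i => Nat.lt_succ_iff.1 (hbig i)
    have hsum : Q.card = ∑ i : Fin k, (Q.filter (fun q => f q = i)).card :=
      Finset.card_eq_sum_card_fiberwise (fun x _ => Finset.mem_univ (f x))
    set T : Finset (Fin k) :=
      Finset.univ.filter (fun i => 2 ≤ (Q.filter (fun q => f q = i)).card) with hT
    have hle : Q.card ≤ k + T.card := by
      rw [hsum]
      calc ∑ i : Fin k, (Q.filter (fun q => f q = i)).card
          ≤ ∑ i : Fin k, (1 + if i ∈ T then 1 else 0) := by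
            refine Finset.sum_le_sum fun i _ => ?_
            by_cases h : i ∈ T
            · have := hbig' i
              simp only [h, if_true]
              omega
            · have h2 : ¬ 2 ≤ (Q.filter (fun q => f q = i)).card := by
                rw [hT, Finset.mem_filter] at h
                push_neg at h
                have := h (Finset.mem_univ i)
                omega
              simp only [h, if_false]
              omega
        _ = k + T.card := by
            rw [Finset.sum_add_distrib, Finset.sum_const, Finset.sum_ite_mem,
              Finset.univ_inter, Finset.sum_const]
            simp [mul_comm]
    have hT4 : 4 ≤ T.card := by omega
    -- pick four distinct parts with ≥ 2 vertices of Q each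
    obtain ⟨i1, hi1⟩ := Finset.card_pos.1 (by omega : 0 < T.card)
    have e1 : 3 ≤ (T.erase i1).card := by rw [Finset.card_erase_of_mem hi1]; omega
    obtain ⟨i2, hi2⟩ := Finset.card_pos.1 (by omega : 0 < (T.erase i1).card)
    have e2 : 2 ≤ ((T.erase i1).erase i2).card := by
      rw [Finset.card_erase_of_mem hi2]; omega
    obtain ⟨i3, hi3⟩ := Finset.card_pos.1 (by omega : 0 < ((T.erase i1).erase i2).card)
    have e3 : 1 ≤ (((T.erase i1).erase i2).erase i3).card := by
      rw [Finset.card_erase_of_mem hi3]; omega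
    obtain ⟨i4, hi4⟩ := Finset.card_pos.1
      (by omega : 0 < (((T.erase i1).erase i2).erase i3).card)
    have hi4' := Finset.mem_erase.1 hi4
    have hi3' := Finset.mem_erase.1 hi3
    have hi43 : i4 ≠ i3 := hi4'.1
    have hi42 : i4 ≠ i2 := (Finset.mem_erase.1 hi4'.2).1
    have hi41 : i4 ≠ i1 := (Finset.mem_erase.1 (Finset.mem_erase.1 hi4'.2).2).1
    have hi32 : i3 ≠ i2 := hi3'.1
    have hi31 : i3 ≠ i1 := (Finset.mem_erase.1 hi3'.2).1
    have hi21 : i2 ≠ i1 := (Finset.mem_erase.1 hi2).1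
    have hi2T : i2 ∈ T := (Finset.mem_erase.1 hi2).2
    have hi3T : i3 ∈ T := (Finset.mem_erase.1 hi3'.2).2
    have hi4T : i4 ∈ T := (Finset.mem_erase.1 (Finset.mem_erase.1 hi4'.2).2).2
    have hmem2 : ∀ i ∈ T, ∃ a b, a ∈ Q ∧ b ∈ Q ∧ f a = i ∧ f b = i ∧ a ≠ b := by
      intro i hi
      rw [hT, Finset.mem_filter] at hi
      obtain ⟨a, b, ha, hb, hab⟩ := Finset.one_lt_card_iff.1 hi.2
      rw [Finset.mem_filter] at ha hb
      exact ⟨a, b, ha.1, hb.1, ha.2, hb.2, hab⟩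
    obtain ⟨a1, -, ha1Q, -, ha1f, -, -⟩ := hmem2 i1 hi1
    obtain ⟨u, v, huv⟩ : ∃ u v, E a1 = s(u, v) :=
      Sym2.ind (fun u v => ⟨u, v, rfl⟩) (E a1)
    have huvne : u ≠ v := by
      have := hEedge a1
      rw [huv, SimpleGraph.mem_edgeSet] at this
      exact this.ne
    -- for each other doubled part, one edge through u and one through v
    have hsplit : ∀ i, i ∈ T → i ≠ i1 → ∃ c d, c ∈ Q ∧ d ∈ Q ∧ f c = i ∧ f d = i ∧
        u ∈ E c ∧ v ∈ E d := by
      intro i hi hne1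
      obtain ⟨a, b, haQ, hbQ, haf, hbf, hab⟩ := hmem2 i hi
      have hufv : ∀ q ∈ Q, f q = i → u ∈ E q ∨ v ∈ E q := by
        intro q hq hqf
        obtain ⟨w, hw1, hwq⟩ := hdiff a1 ha1Q q hq (by rw [ha1f, hqf]; exact hne1.symm)
        rw [huv] at hw1
        rcases Sym2.mem_iff.1 hw1 with rfl | rfl
        · exact Or.inl hwq
        · exact Or.inr hwq
      have nab := hsame a b hab (haf.trans hbf.symm)
      rcases hufv a haQ haf with ka | ka <;> rcases hufv b hbQ hbf with kb | kb
      · exact absurd ⟨u, ka, kb⟩ nab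
      · exact ⟨a, b, haQ, hbQ, haf, hbf, ka, kb⟩
      · exact ⟨b, a, hbQ, haQ, hbf, haf, kb, ka⟩
      · exact absurd ⟨v, ka, kb⟩ nab
    obtain ⟨c2, d2, hc2Q, hd2Q, hc2f, hd2f, hc2u, hd2v⟩ := hsplit i2 hi2T hi21
    obtain ⟨c3, d3, hc3Q, hd3Q, hc3f, hd3f, hc3u, hd3v⟩ := hsplit i3 hi3T hi31
    obtain ⟨c4, d4, hc4Q, hd4Q, hc4f, hd4f, hc4u, hd4v⟩ := hsplit i4 hi4T hi41
    -- notation: E c2 = s(u, w2), E d3 = s(v, x3), E d4 = s(v, x4)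
    have hnea1 : ∀ q, f q ≠ i1 → E q ≠ E a1 := by
      intro q hq hEq
      exact hq (by rw [hEinj q a1 hEq, ha1f])
    have hw2 := Sym2.other_spec hc2u
    have hx3 := Sym2.other_spec hd3v
    have hx4 := Sym2.other_spec hd4v
    set w2 := Sym2.Mem.other hc2u with hw2def
    set x3 := Sym2.Mem.other hd3v with hx3def
    set x4 := Sym2.Mem.other hd4v with hx4def
    have hw2v : w2 ≠ v := by
      intro h
      exact hnea1 c2 (by rw [hc2f]; exact hi21) (by rw [← hw2, h, huv])
    have hx3u : x3 ≠ u := by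
      intro h
      refine hnea1 d3 (by rw [hd3f]; exact hi31) ?_
      rw [← hx3, h, huv, Sym2.eq_swap]
    have hx4u : x4 ≠ u := by
      intro h
      refine hnea1 d4 (by rw [hd4f]; exact hi41) ?_
      rw [← hx4, h, huv, Sym2.eq_swap]
    have hkey : ∀ (d : α) (x : V), d ∈ Q → f d ≠ i2 → s(v, x) = E d → x ≠ u → w2 = x := by
      intro d x hdQ hdf hxspec hxu
      obtain ⟨w, hwc, hwd⟩ := hdiff c2 hc2Q d hdQ (by rw [hc2f]; exact fun h => hdf h.symm)
      rw [← hw2] at hwc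
      rw [← hxspec] at hwd
      rcases Sym2.mem_iff.1 hwc with rfl | rfl <;> rcases Sym2.mem_iff.1 hwd with h' | h'
      · exact absurd h' huvne
      · exact absurd h'.symm hxu
      · exact absurd h' hw2v
      · exact h'
    have hw2x3 : w2 = x3 := hkey d3 x3 hd3Q (by rw [hd3f]; exact hi32) hx3 hx3u
    have hw2x4 : w2 = x4 := hkey d4 x4 hd4Q (by rw [hd4f]; exact hi42.symm ∘ Eq.symm) hx4 hx4u
    have : E d3 = E d4 := by rw [← hx3, ← hx4, ← hw2x3, ← hw2x4]
    have hd34 : d3 = d4 := hEinj _ _ this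
    refine hi43 ?_
    rw [← hd4f, ← hd3f, hd34]
end

section
/- A finite simple graph G is a proper 2-color-line graph if and only if the vertex set of G admits a partition V(G) = A ∪ B into two (possibly empty) cliques such that every vertex in A has at most two neighbors in B and every vertex in B has at most two neighbors in A. -/
open SimpleGraph

lemma sym2_set_ncard_le (V : Type) (s : Sym2 V) : {w | w ∈ s}.ncard ≤ 2 := by
  induction s using Sym2.ind with
  | _ a b =>
    have : {w | w ∈ s(a,b)} = {a, b} := by ext w; simp [Sym2.mem_iff]
    rw [this]
    calc ({a, b} : Set V).ncard ≤ ({b} : Set V).ncard + 1 := Set.ncard_insert_le _ _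
    _ ≤ 2 := by rw [Set.ncard_singleton]

lemma fin2_cases (c : Fin 2) : c = 0 ∨ c = 1 := by omega


/-- Port vertex: the endpoint of the edge for `x` directed at `o`. -/
def clPort {α : Type} (x : α) (o : Option α) (i : Fin 2) : Sym2 α ⊕ α × Fin 2 :=
  o.elim (Sum.inr (x, i)) (fun b => Sum.inl s(x, b))

/-- The edge assigned to vertex `x`. -/
def clEdge {α : Type} (f : α → Option α × Option α) (x : α) :
    Sym2 (Sym2 α ⊕ α × Fin 2) :=
  s(clPort x (f x).1 0, clPort x (f x).2 1)

section Aux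
variable {α : Type} (N : α → Set α) (f : α → Option α × Option α)
  (hf1 : ∀ x b, b ∈ N x ↔ ((f x).1 = some b ∨ (f x).2 = some b))
  (hf2 : ∀ x, (f x).1 = (f x).2 → (f x).1 = none)
  (hNne : ∀ x y, y ∈ N x → y ≠ x)

include hf1 hf2 hNne in
lemma clPort_ne (x : α) : clPort x (f x).1 0 ≠ clPort x (f x).2 1 := by
  rcases h1 : (f x).1 with _ | b1 <;> rcases h2 : (f x).2 with _ | b2 <;>
    simp only [clPort, Option.elim] <;> intro hcon
  · simp at hcon
  · simp at hcon
  · simp at hcon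
  · have hb1 : b1 ∈ N x := (hf1 x b1).mpr (Or.inl h1)
    have hb2 : b2 ∈ N x := (hf1 x b2).mpr (Or.inr h2)
    have := Sym2.eq_iff.mp (Sum.inl.inj hcon)
    have hbb : b1 = b2 := by
      rcases this with ⟨-, h⟩ | ⟨h, h'⟩
      · exact h
      · exact absurd h.symm (hNne x b2 hb2)
    have heq : (f x).1 = (f x).2 := by rw [h1, h2, hbb]
    have hn := hf2 x heq
    rw [h1] at hn
    exact Option.some_ne_none _ hn

include hf1 in
lemma inl_mem_clEdge (x : α) (s : Sym2 α) :
    Sum.inl s ∈ clEdge f x ↔ ∃ b ∈ N x, s = s(x, b) := by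
  simp only [clEdge, Sym2.mem_iff]
  constructor
  · rintro (h | h)
    · rcases h1 : (f x).1 with _ | b
      · rw [h1] at h; simp [clPort] at h
      · rw [h1] at h; simp only [clPort, Option.elim] at h
        exact ⟨b, (hf1 x b).mpr (Or.inl h1), Sum.inl.inj h⟩
    · rcases h2 : (f x).2 with _ | b
      · rw [h2] at h; simp [clPort] at h
      · rw [h2] at h; simp only [clPort, Option.elim] at h
        exact ⟨b, (hf1 x b).mpr (Or.inr h2), Sum.inl.inj h⟩
  · rintro ⟨b, hb, rfl⟩
    rcases (hf1 x b).mp hb with h | h <;> rw [h] <;> simp [clPort]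

lemma inr_mem_clEdge (x y : α) (i : Fin 2) :
    Sum.inr (y, i) ∈ clEdge f x → y = x := by
  simp only [clEdge, Sym2.mem_iff]
  rintro (h | h)
  · rcases h1 : (f x).1 with _ | b <;> rw [h1] at h <;> simp [clPort] at h
    exact h.1
  · rcases h2 : (f x).2 with _ | b <;> rw [h2] at h <;> simp [clPort] at h
    exact h.1

include hf1 in
lemma shared_iff (hNsymm : ∀ x y, y ∈ N x → x ∈ N y) (x y : α) :
    (∃ w, w ∈ clEdge f x ∧ w ∈ clEdge f y) ↔ x = y ∨ y ∈ N x := by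
  constructor
  · rintro ⟨w, hwx, hwy⟩
    rcases w with s | ⟨z, i⟩
    · obtain ⟨b, hb, rfl⟩ := (inl_mem_clEdge N f hf1 x s).mp hwx
      obtain ⟨c, hc, hsc⟩ := (inl_mem_clEdge N f hf1 y _).mp hwy
      rcases Sym2.eq_iff.mp hsc with ⟨h1, -⟩ | ⟨h1, h2⟩
      · exact Or.inl h1
      · exact Or.inr (h2 ▸ hb)
    · exact Or.inl ((inr_mem_clEdge f x z i hwx).symm.trans
        (inr_mem_clEdge f y z i hwy))
  · rintro (rfl | hy)
    · exact ⟨clPort x (f x).1 0, Sym2.mem_mk_left _ _, Sym2.mem_mk_left _ _⟩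
    · refine ⟨Sum.inl s(x, y), ?_, ?_⟩
      · exact (inl_mem_clEdge N f hf1 x _).mpr ⟨y, hy, rfl⟩
      · exact (inl_mem_clEdge N f hf1 y _).mpr ⟨x, hNsymm x y hy, Sym2.eq_swap.symm⟩

include hf1 hf2 hNne in
omit hNne in
lemma clEdge_inj (x y : α) (h : clEdge f x = clEdge f y) : x = y := by
  by_contra hne
  -- endpoints of clEdge x belong to clEdge y
  have hmem1 : clPort x (f x).1 0 ∈ clEdge f y := by
    rw [← h]; exact Sym2.mem_mk_left _ _
  have hmem2 : clPort x (f x).2 1 ∈ clEdge f y := by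
    rw [← h]; exact Sym2.mem_mk_right _ _
  rcases h1 : (f x).1 with _ | b1
  · rw [h1] at hmem1; simp only [clPort, Option.elim] at hmem1
    exact hne (inr_mem_clEdge f y x 0 hmem1)
  rcases h2 : (f x).2 with _ | b2
  · rw [h2] at hmem2; simp only [clPort, Option.elim] at hmem2
    exact hne (inr_mem_clEdge f y x 1 hmem2)
  rw [h1] at hmem1; rw [h2] at hmem2
  simp only [clPort, Option.elim] at hmem1 hmem2
  obtain ⟨c1, hc1, hs1⟩ := (inl_mem_clEdge N f hf1 y _).mp hmem1
  obtain ⟨c2, hc2, hs2⟩ := (inl_mem_clEdge N f hf1 y _).mp hmem2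
  have hb1 : b1 = y := by
    rcases Sym2.eq_iff.mp hs1 with ⟨hxy, -⟩ | ⟨-, hb⟩
    · exact absurd hxy hne
    · exact hb
  have hb2 : b2 = y := by
    rcases Sym2.eq_iff.mp hs2 with ⟨hxy, -⟩ | ⟨-, hb⟩
    · exact absurd hxy hne
    · exact hb
  have : (f x).1 = (f x).2 := by rw [h1, h2, hb1, hb2]
  have := hf2 x this
  rw [h1] at this; simp at this

end Aux

/-- `G` is a proper 2-color-line graph iff `V(G)` can be partitioned into two (possibly
empty) cliques `A`, `B` such that every vertex of `A` has at most two neighbors in `B`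
and vice versa. -/
theorem properTwoColorLine_iff_bicliquePartition {α : Type} [Fintype α]
    (G : SimpleGraph α) :
    IsProperKColorLineGraph 2 G ↔
      ∃ A B : Set α,
        Disjoint A B ∧ A ∪ B = Set.univ ∧
        G.IsClique A ∧ G.IsClique B ∧
        (∀ v ∈ A, (G.neighborSet v ∩ B).ncard ≤ 2) ∧
        (∀ v ∈ B, (G.neighborSet v ∩ A).ncard ≤ 2) := by
  constructor
  · intro h

    obtain ⟨V, instV, H, φ, hprop, ⟨iso⟩⟩ := h
    classical
    refine ⟨{x | φ (iso x) = 0}, {x | φ (iso x) = 1}, ?_, ?_, ?_, ?_, ?_, ?_⟩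
    · rw [Set.disjoint_left]
      intro x hx0 hx1
      simp only [Set.mem_setOf_eq] at hx0 hx1
      rw [hx0] at hx1; exact absurd hx1 (by decide)
    · ext x
      simp only [Set.mem_union, Set.mem_setOf_eq, Set.mem_univ, iff_true]
      exact fin2_cases _
    · intro x hx y hy hne
      simp only [Set.mem_setOf_eq] at hx hy
      exact iso.map_adj_iff.mp ⟨fun he => hne (iso.injective he), Or.inr (hx.trans hy.symm)⟩
    · intro x hx y hy hne
      simp only [Set.mem_setOf_eq] at hx hy
      exact iso.map_adj_iff.mp ⟨fun he => hne (iso.injective he), Or.inr (hx.trans hy.symm)⟩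
    all_goals {
      intro v hv
      simp only [Set.mem_setOf_eq] at hv
      set s := G.neighborSet v ∩ _ with hs
      have hVne : Nonempty V := ⟨((iso v : Sym2 V)).out.1⟩
      have key : ∀ y, ∃ w, y ∈ s → (w ∈ (iso v : Sym2 V) ∧ w ∈ (iso y : Sym2 V)) := by
        intro y
        by_cases hy : y ∈ s
        · obtain ⟨hadj, hyB⟩ := hy
          simp only [Set.mem_setOf_eq] at hyB
          have hCL : (colorLineGraph H φ).Adj (iso v) (iso y) := iso.map_adj_iff.mpr hadj
          rcases hCL.2 with hsh | hceq
          · exact ⟨hsh.choose, fun _ => hsh.choose_spec⟩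
          · rw [hv, hyB] at hceq; exact absurd hceq (by decide)
        · exact ⟨Classical.arbitrary V, fun h => absurd h hy⟩
      choose g hg using key
      have h1 : ∀ y ∈ s, g y ∈ {w | w ∈ (iso v : Sym2 V)} := fun y hy => (hg y hy).1
      have h2 : Set.InjOn g s := by
        intro y1 hy1 y2 hy2 heq
        by_contra hne
        have hisone : iso y1 ≠ iso y2 := fun he => hne (iso.injective he)
        have hy1B := hy1.2
        have hy2B := hy2.2
        simp only [Set.mem_setOf_eq] at hy1B hy2B
        exact hprop _ _ hisone ⟨g y1, (hg y1 hy1).2, heq ▸ (hg y2 hy2).2⟩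
          (hy1B.trans hy2B.symm)
      calc s.ncard ≤ {w | w ∈ (iso v : Sym2 V)}.ncard :=
            Set.ncard_le_ncard_of_injOn g h1 h2 (Set.toFinite _)
        _ ≤ 2 := sym2_set_ncard_le V _
    }
  · intro h

    classical
    obtain ⟨A, B, hdisj, hunion, hcA, hcB, hA, hB⟩ := h
    set N : α → Set α :=
      fun x => {y | G.Adj x y ∧ ((x ∈ A ∧ y ∈ B) ∨ (x ∈ B ∧ y ∈ A))} with hNdef
    have hmemAB : ∀ x : α, x ∈ A ∨ x ∈ B := by
      intro x
      have : x ∈ A ∪ B := by rw [hunion]; trivial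
      exact this
    have hnAB : ∀ x, x ∈ A → x ∉ B := fun x hx hx' => Set.disjoint_left.mp hdisj hx hx'
    have hNsymm : ∀ x y, y ∈ N x → x ∈ N y := by
      rintro x y ⟨hadj, hc⟩
      exact ⟨hadj.symm, by tauto⟩
    have hNne : ∀ x y, y ∈ N x → y ≠ x := fun x y hy => hy.1.ne'
    have hNcard : ∀ x, (N x).ncard ≤ 2 := by
      intro x
      rcases hmemAB x with hx | hx
      · have hsub : N x ⊆ G.neighborSet x ∩ B := by
          rintro y ⟨hadj, ⟨-, hy⟩ | ⟨hxB, -⟩⟩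
          · exact ⟨hadj, hy⟩
          · exact absurd hxB (hnAB x hx)
        exact le_trans (Set.ncard_le_ncard hsub (Set.toFinite _)) (hA x hx)
      · have hsub : N x ⊆ G.neighborSet x ∩ A := by
          rintro y ⟨hadj, ⟨hxA, -⟩ | ⟨-, hy⟩⟩
          · exact absurd hx (hnAB x hxA)
          · exact ⟨hadj, hy⟩
        exact le_trans (Set.ncard_le_ncard hsub (Set.toFinite _)) (hB x hx)
    have hex : ∀ x, ∃ p : Option α × Option α,
        (∀ b, b ∈ N x ↔ (p.1 = some b ∨ p.2 = some b)) ∧ (p.1 = p.2 → p.1 = none) := by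
      intro x
      have h2 := hNcard x
      rcases hn : (N x).ncard with _ | _ | _ | n
      · rw [Set.ncard_eq_zero (Set.toFinite _)] at hn
        refine ⟨(none, none), fun b => ?_, fun _ => rfl⟩
        simp [hn]
      · rw [Set.ncard_eq_one] at hn
        obtain ⟨a, ha⟩ := hn
        refine ⟨(some a, none), fun b => ?_, fun hcon => by simp at hcon⟩
        simp only [ha, Set.mem_singleton_iff]
        constructor
        · rintro rfl; exact Or.inl rfl
        · rintro (hb | hb)
          · exact (Option.some_inj.mp hb).symm
          · simp at hb
      · rw [Set.ncard_eq_two] at hn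
        obtain ⟨a, b', hab, hs⟩ := hn
        refine ⟨(some a, some b'), fun c => ?_, fun hcon => absurd (Option.some_inj.mp hcon) hab⟩
        simp only [hs, Set.mem_insert_iff, Set.mem_singleton_iff]
        constructor
        · rintro (rfl | rfl)
          · exact Or.inl rfl
          · exact Or.inr rfl
        · rintro (hc | hc)
          · exact Or.inl (Option.some_inj.mp hc).symm
          · exact Or.inr (Option.some_inj.mp hc).symm
      · omega
    choose f hf1 hf2 using hex
    have hf1' : ∀ x b, b ∈ N x ↔ ((f x).1 = some b ∨ (f x).2 = some b) := hf1
    -- the host graph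
    set H : SimpleGraph (Sym2 α ⊕ α × Fin 2) :=
      SimpleGraph.fromEdgeSet (Set.range (clEdge f)) with hHdef
    have hndiag : ∀ x, ¬ (clEdge f x).IsDiag := by
      intro x hdiag
      exact clPort_ne N f hf1 hf2 hNne x (Sym2.mk_isDiag_iff.mp hdiag)
    have hEdge : H.edgeSet = Set.range (clEdge f) := by
      rw [hHdef, SimpleGraph.edgeSet_fromEdgeSet]
      ext e
      simp only [Set.mem_diff, Set.mem_setOf_eq, and_iff_left_iff_imp]
      rintro ⟨x, rfl⟩
      exact hndiag x
    have hmem : ∀ x, clEdge f x ∈ H.edgeSet := by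
      intro x; rw [hEdge]; exact ⟨x, rfl⟩
    set eFun : α → H.edgeSet := fun x => ⟨clEdge f x, hmem x⟩ with heFun
    have hinj : Function.Injective eFun := by
      intro x y hxy
      exact clEdge_inj N f hf1 hf2 x y (Subtype.ext_iff.mp hxy)
    have hsurj : Function.Surjective eFun := by
      rintro ⟨e, he⟩
      rw [hEdge] at he
      obtain ⟨x, rfl⟩ := he
      exact ⟨x, rfl⟩
    set φ : H.edgeSet → Fin 2 := fun e => if ∃ x ∈ A, clEdge f x = e.val then 0 else 1 with hφdef
    have hφ : ∀ x, φ (eFun x) = if x ∈ A then 0 else 1 := by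
      intro x
      by_cases hx : x ∈ A
      · rw [if_pos hx, hφdef]
        exact if_pos ⟨x, hx, rfl⟩
      · rw [if_neg hx, hφdef]
        refine if_neg ?_
        rintro ⟨z, hz, hze⟩
        exact hx (clEdge_inj N f hf1 hf2 z x hze ▸ hz)
    have hχ : ∀ x y, (φ (eFun x) = φ (eFun y)) ↔ ((x ∈ A) ↔ (y ∈ A)) := by
      intro x y
      rw [hφ, hφ]
      by_cases hx : x ∈ A <;> by_cases hy : y ∈ A <;> simp [hx, hy]
    refine ⟨Sym2 α ⊕ α × Fin 2, inferInstance, H, φ, ?_, ⟨?_⟩⟩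
    · -- properness
      rintro e g hne ⟨w, hwe, hwg⟩
      obtain ⟨x, rfl⟩ := hsurj e
      obtain ⟨y, rfl⟩ := hsurj g
      have hxy : x ≠ y := fun hh => hne (hh ▸ rfl)
      have hshared : x = y ∨ y ∈ N x :=
        (shared_iff N f hf1 hNsymm x y).mp ⟨w, hwe, hwg⟩
      rcases hshared with rfl | hyN
      · exact absurd rfl hxy
      · rcases hyN.2 with ⟨hxA, hyB⟩ | ⟨hxB, hyA⟩
        · rw [hφ, hφ, if_pos hxA, if_neg (fun hyA => hnAB y hyA hyB)]
          decide
        · rw [hφ, hφ, if_neg (fun hxA => hnAB x hxA hxB), if_pos hyA]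
          decide
    · -- the isomorphism
      refine ⟨Equiv.ofBijective eFun ⟨hinj, hsurj⟩, ?_⟩
      intro x y
      show (colorLineGraph H φ).Adj (eFun x) (eFun y) ↔ G.Adj x y
      constructor
      · rintro ⟨hne, hsh | hceq⟩
        · rcases (shared_iff N f hf1 hNsymm x y).mp hsh with rfl | hyN
          · exact absurd rfl hne
          · exact hyN.1
        · have hxy : x ≠ y := fun hh => hne (hh ▸ rfl)
          rcases (hχ x y).mp hceq with hiff
          by_cases hx : x ∈ A
          · exact hcA hx (hiff.mp hx) hxy
          · have hxB : x ∈ B := (hmemAB x).resolve_left hx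
            have hyB : y ∈ B := (hmemAB y).resolve_left (fun hyA => hx (hiff.mpr hyA))
            exact hcB hxB hyB hxy
      · intro hadj
        have hxy : x ≠ y := hadj.ne
        refine ⟨fun hh => hxy (hinj hh), ?_⟩
        by_cases hsame : (x ∈ A) ↔ (y ∈ A)
        · exact Or.inr ((hχ x y).mpr hsame)
        · refine Or.inl ((shared_iff N f hf1 hNsymm x y).mpr (Or.inr ?_))
          refine ⟨hadj, ?_⟩
          by_cases hx : x ∈ A
          · have hy : y ∉ A := fun hyA => hsame ⟨fun _ => hyA, fun _ => hx⟩
            exact Or.inl ⟨hx, (hmemAB y).resolve_left hy⟩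
          · have hy : y ∈ A := by
              by_contra hy
              exact hsame ⟨fun hxA => absurd hxA hx, fun hyA => absurd hyA hy⟩
            exact Or.inr ⟨(hmemAB x).resolve_left hx, hy⟩
end
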